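/- Let L_down : ℝ^n → ℝ be twice continuously differentiable with ‖∇²L_down(θ)‖_op ≤ L everywhere. Fix θ, η > 0, and a differentiable map φ ↦ g_pre(φ) ∈ ℝ^m → ℝ^n. Define J(φ) = L_down(θ - η·g_pre(φ)) and V(φ) = ⟨∇L_down(θ), g_pre(φ)⟩. Then ‖∇_φ J(φ) + η·∇_φ V(φ)‖ ≤ L·η²·‖Dg_pre(φ)‖_op·‖g_pre(φ)‖, where Dg_pre(φ) is the Jacobian of g_pre at φ. -/

import Mathlib

open scoped RealInnerProductSpace
open InnerProductSpace ContinuousLinearMap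

/-- Gradient-level surrogate bound: the designer gradients of `J` and of `-η V`
differ by `O(η²)`, controlled by the Hessian bound and the Jacobian norm of `g_pre`. -/
theorem designer_gradient_surrogate_bound
    (n m : ℕ) (Ldown : EuclideanSpace ℝ (Fin n) → ℝ)
    (L : ℝ)
    (hC2 : ContDiff ℝ 2 Ldown)
    (hhess : ∀ x : EuclideanSpace ℝ (Fin n), ‖fderiv ℝ (gradient Ldown) x‖ ≤ L)
    (θ : EuclideanSpace ℝ (Fin n)) (η : ℝ) (hη : 0 < η)
    (gpre : EuclideanSpace ℝ (Fin m) → EuclideanSpace ℝ (Fin n))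
    (hgdiff : Differentiable ℝ gpre)
    (φ : EuclideanSpace ℝ (Fin m)) :
    ‖gradient (fun ψ => Ldown (θ - η • gpre ψ)) φ +
        η • gradient (fun ψ => ⟪gradient Ldown θ, gpre ψ⟫) φ‖ ≤
      L * η ^ 2 * ‖fderiv ℝ gpre φ‖ * ‖gpre φ‖ := by
  set D := fderiv ℝ gpre φ with hD
  set Da := ContinuousLinearMap.adjoint D with hDa
  set G := gradient Ldown θ with hG
  set pt := θ - η • gpre φ with hpt
  set G' := gradient Ldown pt with hG'
  have hLdiff : Differentiable ℝ Ldown := hC2.differentiable (by norm_num)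
  -- fderiv of Ldown at pt is toDual G'
  have hfd : fderiv ℝ Ldown pt = (toDual ℝ _) G' := by
    have := (hLdiff pt).hasGradientAt
    rw [hasGradientAt_iff_hasFDerivAt] at this
    exact this.fderiv
  -- inner map derivative
  have hinner : HasFDerivAt (fun ψ => θ - η • gpre ψ) (-(η • D)) φ := by
    have h := (hasFDerivAt_const θ φ).sub ((hgdiff φ).hasFDerivAt.const_smul η)
    rw [zero_sub] at h
    exact h
  -- gradient of J
  have hJ : HasGradientAt (fun ψ => Ldown (θ - η • gpre ψ)) (-(η • Da G')) φ := by
    rw [hasGradientAt_iff_hasFDerivAt]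
    have hcomp : HasFDerivAt (fun ψ => Ldown (θ - η • gpre ψ))
        (((toDual ℝ _) G').comp (-(η • D))) φ := by
      have := ((hLdiff pt).hasFDerivAt).comp φ hinner
      rwa [hfd] at this
    refine hcomp.congr_fderiv ?_
    ext v
    simp only [ContinuousLinearMap.coe_comp', Function.comp_apply, toDual_apply_apply,
      ContinuousLinearMap.neg_apply, ContinuousLinearMap.smul_apply]
    rw [inner_neg_left, inner_neg_right, real_inner_smul_left, real_inner_smul_right,
      ContinuousLinearMap.adjoint_inner_left]
  -- gradient of V
  have hV : HasGradientAt (fun ψ => ⟪G, gpre ψ⟫) (Da G) φ := by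
    rw [hasGradientAt_iff_hasFDerivAt]
    have hcomp : HasFDerivAt (fun ψ => ⟪G, gpre ψ⟫) ((innerSL ℝ G).comp D) φ :=
      ((innerSL ℝ G).hasFDerivAt).comp φ (hgdiff φ).hasFDerivAt
    refine hcomp.congr_fderiv ?_
    ext v
    simp only [ContinuousLinearMap.coe_comp', Function.comp_apply, toDual_apply_apply,
      innerSL_apply_apply]
    rw [ContinuousLinearMap.adjoint_inner_left]
  rw [hJ.gradient, hV.gradient]
  have hkey : -(η • Da G') + η • Da G = η • Da (G - G') := by
    rw [map_sub, smul_sub]; abel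
  rw [hkey]
  -- Lipschitz bound on the gradient
  have hgraddiff : Differentiable ℝ (gradient Ldown) := by
    have h1 : Differentiable ℝ (fderiv ℝ Ldown) :=
      (hC2.fderiv_right (m := 1) (by norm_num)).differentiable one_ne_zero
    have heq : gradient Ldown = fun x => (toDual ℝ _).symm (fderiv ℝ Ldown x) := rfl
    rw [heq]
    exact (toDual ℝ (EuclideanSpace ℝ (Fin n))).symm.toContinuousLinearEquiv.differentiable.comp h1
  have hlip : ‖G - G'‖ ≤ L * ‖θ - pt‖ := by
    have := Convex.norm_image_sub_le_of_norm_fderiv_le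
      (f := gradient Ldown) (C := L) (s := Set.univ)
      (fun x _ => (hgraddiff x)) (fun x _ => hhess x)
      convex_univ (Set.mem_univ pt) (Set.mem_univ θ)
    simpa [hG, hG'] using this
  have hθpt : ‖θ - pt‖ = η * ‖gpre φ‖ := by
    rw [hpt]
    simp [norm_smul, abs_of_pos hη]
  calc ‖η • Da (G - G')‖ = η * ‖Da (G - G')‖ := by
        rw [norm_smul, Real.norm_eq_abs, abs_of_pos hη]
    _ ≤ η * (‖Da‖ * ‖G - G'‖) := by
        exact mul_le_mul_of_nonneg_left (Da.le_opNorm _) hη.le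
    _ ≤ η * (‖D‖ * (L * (η * ‖gpre φ‖))) := by
        have hna : ‖Da‖ = ‖D‖ := by
          simp [hDa]
        rw [hna]
        have : ‖G - G'‖ ≤ L * (η * ‖gpre φ‖) := by rw [← hθpt]; exact hlip
        exact mul_le_mul_of_nonneg_left (mul_le_mul_of_nonneg_left this (norm_nonneg D)) hη.le
    _ = L * η ^ 2 * ‖D‖ * ‖gpre φ‖ := by ring
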